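/- In Y_{d,n}^aff(q), for each i = 1,...,n-1 and each positive integer a: g_i X_i^a = X_{i+1}^a g_i - (q - q^{-1}) e_i Σ_{k=0}^{a-1} X_i^k X_{i+1}^{a-k}. -/

import Mathlib

open LaurentPolynomial Finset

noncomputable section

/-- The ring `R = ℂ[q, q⁻¹]` of Laurent polynomials over `ℂ`. -/
abbrev Rq := LaurentPolynomial ℂ

/-- The indeterminate `q`. -/
def qq : Rq := T 1

/-- `q⁻¹`. -/
def qqinv : Rq := T (-1)

/-- The transposition `s_i = (i, i+1)` acting on the index `j`. -/
def sAdj (i j : ℕ) : ℕ := if j = i then i + 1 else if j = i + 1 then i else j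

/-- The transposition `s_{i,l} = (i, l)` acting on the index `j`. -/
def sTrp (i l j : ℕ) : ℕ := if j = i then l else if j = l then i else j

/-- A realisation of the defining presentation of the affine Yokonuma--Hecke
algebra `Y_{d,n}^aff(q)` inside an `R`-algebra `A`:  elements
`t_1, …, t_n`, `g_1, …, g_{n-1}`, `X_1, X_1⁻¹` (together with the derived
elements `X_2, …, X_n` given by `X_{i+1} = g_i X_i g_i` and their inverses)
satisfying the defining relations (br1), (br2), (fr1)–(fr3), (aff1)–(aff3)
and (quad). -/
structure YHAff (A : Type*) [Ring A] [Algebra Rq A] (d n : ℕ) where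
  t : ℕ → A
  g : ℕ → A
  X : ℕ → A
  Xinv : ℕ → A
  br1 : ∀ i j, 1 ≤ i → i ≤ n - 1 → 1 ≤ j → j ≤ n - 1 → (i + 1 < j ∨ j + 1 < i) →
    g i * g j = g j * g i
  br2 : ∀ i, 1 ≤ i → i ≤ n - 2 → g i * g (i + 1) * g i = g (i + 1) * g i * g (i + 1)
  fr1 : ∀ i j, 1 ≤ i → i ≤ n → 1 ≤ j → j ≤ n → t i * t j = t j * t i
  fr2 : ∀ i j, 1 ≤ i → i ≤ n - 1 → 1 ≤ j → j ≤ n → g i * t j = t (sAdj i j) * g i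
  fr3 : ∀ j, 1 ≤ j → j ≤ n → t j ^ d = 1
  aff1 : X 1 * (g 1 * X 1 * g 1) = g 1 * X 1 * g 1 * X 1
  aff2 : ∀ i, 2 ≤ i → i ≤ n - 1 → X 1 * g i = g i * X 1
  aff3 : ∀ j, 1 ≤ j → j ≤ n → X 1 * t j = t j * X 1
  quad : ∀ i, 1 ≤ i → i ≤ n - 1 → g i ^ 2 =
    1 + algebraMap Rq A (qq - qqinv) *
      (algebraMap Rq A (C (d : ℂ)⁻¹) * ∑ k ∈ range d, t i ^ k * t (i + 1) ^ (d - k)) * g i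
  Xrec : ∀ i, 1 ≤ i → i ≤ n - 1 → X (i + 1) = g i * X i * g i
  XXinv : ∀ i, 1 ≤ i → i ≤ n → X i * Xinv i = 1
  XinvX : ∀ i, 1 ≤ i → i ≤ n → Xinv i * X i = 1

variable {A : Type*} [Ring A] [Algebra Rq A] {d n : ℕ}

/-- The idempotent `e_i = (1/d) ∑_{k=0}^{d-1} t_i^k t_{i+1}^{d-k}`. -/
def YHAff.e (Y : YHAff A d n) (i : ℕ) : A :=
  algebraMap Rq A (C (d : ℂ)⁻¹) * ∑ k ∈ range d, Y.t i ^ k * Y.t (i + 1) ^ (d - k)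

/-- The idempotent `e_{i,l} = (1/d) ∑_{k=0}^{d-1} t_i^k t_l^{d-k}`. -/
def YHAff.eil (Y : YHAff A d n) (i l : ℕ) : A :=
  algebraMap Rq A (C (d : ℂ)⁻¹) * ∑ k ∈ range d, Y.t i ^ k * Y.t l ^ (d - k)

/-- The scalar `q - q⁻¹` viewed inside `A`. -/
def cq (A : Type*) [Ring A] [Algebra Rq A] : A := algebraMap Rq A (qq - qqinv)

/-- `X_i^a` for `a : ℤ`, via `Xinv` for negative exponents. -/
def YHAff.zp (Y : YHAff A d n) (i : ℕ) (a : ℤ) : A :=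
  if 0 ≤ a then Y.X i ^ a.toNat else Y.Xinv i ^ (-a).toNat


lemma mulLift {A : Type*} [Semigroup A] {p q r s : A} (h : p * q = r * s) (x : A) :
    p * (q * x) = r * (s * x) := by rw [← mul_assoc, h, mul_assoc]

lemma mulLift3 {A : Type*} [Semigroup A] {p q r u v w : A} (h : p * q * r = u * v * w) (x : A) :
    p * (q * (r * x)) = u * (v * (w * x)) := by
  rw [← mul_assoc, ← mul_assoc, h, mul_assoc, mul_assoc]

lemma YHconj_pow {A : Type*} [Monoid A] {gg t t' : A} (h : gg * t = t' * gg) (k : ℕ) :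
    gg * t ^ k = t' ^ k * gg := by
  induction k with
  | zero => simp
  | succ m ih =>
    calc gg * t ^ (m + 1) = gg * t ^ m * t := by rw [pow_succ, mul_assoc]
      _ = t' ^ m * (gg * t) := by rw [ih, mul_assoc]
      _ = t' ^ (m + 1) * gg := by rw [h, ← mul_assoc, ← pow_succ]

lemma sAdj_sAdj (i j : ℕ) : sAdj i (sAdj i j) = j := by
  unfold sAdj; split_ifs <;> omega

lemma braid_aux {A : Type*} [Monoid A] (a b c : A)
    (hbc : b * c * b = c * b * c) (hac : a * c = c * a)
    (hIH : a * (b * a * b) = b * a * b * a) :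
    b * a * b * (c * (b * a * b) * c) = c * (b * a * b) * c * (b * a * b) := by
  have hbc1 : ∀ x : A, b * (c * (b * x)) = c * (b * (c * x)) := fun x => by
    rw [← mul_assoc, ← mul_assoc, hbc, mul_assoc, mul_assoc]
  have hac1 : ∀ x : A, a * (c * x) = c * (a * x) := fun x => by
    rw [← mul_assoc, hac, mul_assoc]
  have hbc0 : c * (b * c) = b * (c * b) := by rw [← mul_assoc, ← hbc, mul_assoc]
  have hIH1 : ∀ x : A, a * (b * (a * (b * x))) = b * (a * (b * (a * x))) := fun x => by
    have h := congrArg (· * x) hIH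
    simp only [mul_assoc] at h
    exact h
  simp only [mul_assoc]
  conv_lhs => rw [hbc1 (a * (b * c)), hac1 (b * (c * (a * (b * c)))),
    ← hac1 (b * c), hbc0]
  conv_rhs => rw [hbc1 (a * b), hac1 (b * (c * (a * b))), ← hac1 b,
    ← hbc1 (a * (b * (a * (c * b))))]
  rw [hIH1 (c * b)]

lemma YHAff.X_comm_t (Y : YHAff A d n) : ∀ i, 1 ≤ i → i ≤ n → ∀ j, 1 ≤ j → j ≤ n →
    Y.X i * Y.t j = Y.t j * Y.X i := by
  intro i
  induction i with
  | zero => omega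
  | succ m ih =>
    intro h1 h2 j hj1 hj2
    rcases Nat.eq_zero_or_pos m with hm | hm
    · subst hm; exact Y.aff3 j hj1 hj2
    · have hmn : m ≤ n - 1 := by omega
      have hs1 : 1 ≤ sAdj m j := by unfold sAdj; split_ifs <;> omega
      have hs2 : sAdj m j ≤ n := by unfold sAdj; split_ifs <;> omega
      have hf1 := Y.fr2 m j hm hmn hj1 hj2
      have hf2 := Y.fr2 m (sAdj m j) hm hmn hs1 hs2
      rw [sAdj_sAdj] at hf2
      have hX := ih hm (by omega) (sAdj m j) hs1 hs2
      rw [Y.Xrec m hm hmn]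
      simp only [mul_assoc]
      rw [hf1, mulLift hX, mulLift hf2]

lemma YHAff.X_comm_g (Y : YHAff A d n) : ∀ i, 1 ≤ i → ∀ j, i + 1 ≤ j → j ≤ n - 1 →
    Y.X i * Y.g j = Y.g j * Y.X i := by
  intro i
  induction i with
  | zero => omega
  | succ m ih =>
    intro h1 j hj1 hj2
    rcases Nat.eq_zero_or_pos m with hm | hm
    · subst hm; exact Y.aff2 j hj1 hj2
    · have hgg := Y.br1 m j hm (by omega) (by omega) hj2 (Or.inl (by omega))
      have hXg := ih hm j (by omega) hj2
      rw [Y.Xrec m hm (by omega)]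
      simp only [mul_assoc]
      rw [hgg, mulLift hXg, mulLift hgg]

lemma YHAff.X_comm_next (Y : YHAff A d n) : ∀ i, 1 ≤ i → i ≤ n - 1 →
    Y.X i * Y.X (i + 1) = Y.X (i + 1) * Y.X i := by
  intro i
  induction i with
  | zero => omega
  | succ m ih =>
    intro h1 h2
    rcases Nat.eq_zero_or_pos m with hm | hm
    · subst hm
      rw [Y.Xrec 1 le_rfl h2]
      exact Y.aff1
    · have ihm := ih hm (by omega)
      rw [Y.Xrec m hm (by omega)] at ihm
      have hbr := Y.br2 m hm (by omega)
      have hac := Y.X_comm_g m hm (m + 1) le_rfl h2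
      rw [Y.Xrec (m + 1) (by omega) h2, Y.Xrec m hm (by omega)]
      exact braid_aux (Y.X m) (Y.g m) (Y.g (m + 1)) hbr hac ihm

lemma YHAff.X_comm_e (Y : YHAff A d n) (i m : ℕ) (hi1 : 1 ≤ i) (hi2 : i ≤ n - 1)
    (hm1 : 1 ≤ m) (hm2 : m ≤ n) : Y.X m * Y.e i = Y.e i * Y.X m := by
  have halg : ∀ r : Rq, Y.X m * algebraMap Rq A r = algebraMap Rq A r * Y.X m :=
    fun r => (Algebra.commutes r (Y.X m)).symm
  have hsum : Commute (Y.X m) (∑ k ∈ range d, Y.t i ^ k * Y.t (i + 1) ^ (d - k)) := by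
    refine Commute.sum_right _ _ _ fun k _ => Commute.mul_right ?_ ?_
    · exact (show Commute (Y.X m) (Y.t i) from Y.X_comm_t m hm1 hm2 i hi1 (by omega)).pow_right k
    · exact (show Commute (Y.X m) (Y.t (i + 1)) from
        Y.X_comm_t m hm1 hm2 (i + 1) (by omega) (by omega)).pow_right (d - k)
  unfold YHAff.e
  exact (Commute.mul_right (halg _ : Commute (Y.X m) _) hsum)

lemma sum_swap_e {A : Type*} [Ring A] {d : ℕ} (hd : 0 < d) (t1 t2 : A)
    (hcomm : t1 * t2 = t2 * t1) (h1 : t1 ^ d = 1) (h2 : t2 ^ d = 1) :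
    ∑ k ∈ range d, t2 ^ k * t1 ^ (d - k) = ∑ k ∈ range d, t1 ^ k * t2 ^ (d - k) := by
  refine Finset.sum_nbij' (fun k => (d - k) % d) (fun k => (d - k) % d) ?_ ?_ ?_ ?_ ?_
  · intro a ha; simp only [mem_range] at *; exact Nat.mod_lt _ hd
  · intro a ha; simp only [mem_range] at *; exact Nat.mod_lt _ hd
  · intro a ha; simp only [mem_range] at ha
    show (d - (d - a) % d) % d = a
    rcases Nat.eq_zero_or_pos a with h0 | h0
    · subst h0; simp [Nat.mod_self]
    · rw [Nat.mod_eq_of_lt (by omega : d - a < d),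
        (by omega : d - (d - a) = a), Nat.mod_eq_of_lt ha]
  · intro a ha; simp only [mem_range] at ha
    show (d - (d - a) % d) % d = a
    rcases Nat.eq_zero_or_pos a with h0 | h0
    · subst h0; simp [Nat.mod_self]
    · rw [Nat.mod_eq_of_lt (by omega : d - a < d),
        (by omega : d - (d - a) = a), Nat.mod_eq_of_lt ha]
  · intro a ha
    simp only [mem_range] at ha
    show t2 ^ a * t1 ^ (d - a) = t1 ^ ((d - a) % d) * t2 ^ (d - (d - a) % d)
    rcases Nat.eq_zero_or_pos a with h0 | h0
    · subst h0; simp [h1, h2, Nat.mod_self]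
    · rw [Nat.mod_eq_of_lt (by omega : d - a < d), (by omega : d - (d - a) = a)]
      exact (show Commute t1 t2 from hcomm).symm.pow_pow a (d - a)

lemma YHAff.e_comm_g (Y : YHAff A d n) (hd : 0 < d) (i : ℕ) (h1 : 1 ≤ i) (h2 : i ≤ n - 1) :
    Y.g i * Y.e i = Y.e i * Y.g i := by
  have hii : sAdj i i = i + 1 := by unfold sAdj; split_ifs <;> omega
  have hii1 : sAdj i (i + 1) = i := by unfold sAdj; split_ifs <;> omega
  have hg1 : Y.g i * Y.t i = Y.t (i + 1) * Y.g i := by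
    rw [Y.fr2 i i h1 h2 (by omega) (by omega), hii]
  have hg2 : Y.g i * Y.t (i + 1) = Y.t i * Y.g i := by
    rw [Y.fr2 i (i + 1) h1 h2 (by omega) (by omega), hii1]
  have key : Y.g i * (∑ k ∈ range d, Y.t i ^ k * Y.t (i + 1) ^ (d - k))
      = (∑ k ∈ range d, Y.t i ^ k * Y.t (i + 1) ^ (d - k)) * Y.g i := by
    calc Y.g i * (∑ k ∈ range d, Y.t i ^ k * Y.t (i + 1) ^ (d - k))
        = ∑ k ∈ range d, Y.g i * (Y.t i ^ k * Y.t (i + 1) ^ (d - k)) := Finset.mul_sum _ _ _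
      _ = ∑ k ∈ range d, (Y.t (i + 1) ^ k * Y.t i ^ (d - k)) * Y.g i := by
          refine Finset.sum_congr rfl fun k _ => ?_
          rw [← mul_assoc, YHconj_pow hg1 k, mul_assoc, YHconj_pow hg2 (d - k), ← mul_assoc]
      _ = (∑ k ∈ range d, Y.t (i + 1) ^ k * Y.t i ^ (d - k)) * Y.g i :=
          (Finset.sum_mul _ _ _).symm
      _ = _ := by
          rw [sum_swap_e hd (Y.t i) (Y.t (i + 1))
            (Y.fr1 i (i + 1) h1 (by omega) (by omega) (by omega))
            (Y.fr3 i h1 (by omega)) (Y.fr3 (i + 1) (by omega) (by omega))]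
  unfold YHAff.e
  calc Y.g i * (algebraMap Rq A (C (d : ℂ)⁻¹) * ∑ k ∈ range d, Y.t i ^ k * Y.t (i + 1) ^ (d - k))
      = algebraMap Rq A (C (d : ℂ)⁻¹) *
        (Y.g i * ∑ k ∈ range d, Y.t i ^ k * Y.t (i + 1) ^ (d - k)) := by
        rw [← mul_assoc, ← Algebra.commutes, mul_assoc]
    _ = algebraMap Rq A (C (d : ℂ)⁻¹) *
        ((∑ k ∈ range d, Y.t i ^ k * Y.t (i + 1) ^ (d - k)) * Y.g i) := by rw [key]
    _ = _ := by rw [← mul_assoc]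

lemma cq_central {A : Type*} [Ring A] [Algebra Rq A] (x : A) : x * cq A = cq A * x := by
  unfold cq; exact (Algebra.commutes _ x).symm

lemma YHAff.gX_base (Y : YHAff A d n) (hd : 0 < d) (i : ℕ) (h1 : 1 ≤ i) (h2 : i ≤ n - 1) :
    Y.g i * Y.X i = Y.X (i + 1) * Y.g i - cq A * Y.e i * Y.X (i + 1) := by
  have hsq : Y.g i ^ 2 = 1 + cq A * Y.e i * Y.g i := by
    unfold cq YHAff.e; exact Y.quad i h1 h2
  have hrec := Y.Xrec i h1 h2
  have hXe := Y.X_comm_e i i h1 h2 h1 (by omega)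
  have heg := (Y.e_comm_g hd i h1 h2).symm
  have key : Y.X (i + 1) * Y.g i = Y.g i * Y.X i + cq A * Y.e i * Y.X (i + 1) := by
    calc Y.X (i + 1) * Y.g i = Y.g i * Y.X i * (Y.g i * Y.g i) := by
          rw [hrec, mul_assoc, mul_assoc]
      _ = Y.g i * Y.X i * Y.g i ^ 2 := by rw [sq]
      _ = Y.g i * Y.X i * (1 + cq A * Y.e i * Y.g i) := by rw [hsq]
      _ = Y.g i * Y.X i + Y.g i * Y.X i * (cq A * Y.e i * Y.g i) := by rw [mul_add, mul_one]
      _ = Y.g i * Y.X i + cq A * Y.e i * Y.X (i + 1) := by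
          congr 1
          calc Y.g i * Y.X i * (cq A * Y.e i * Y.g i)
              = Y.g i * Y.X i * cq A * (Y.e i * Y.g i) := by
                rw [mul_assoc (Y.g i * Y.X i), ← mul_assoc (cq A)]
            _ = cq A * (Y.g i * (Y.X i * (Y.e i * Y.g i))) := by
                rw [cq_central, mul_assoc, mul_assoc]
            _ = cq A * (Y.e i * (Y.g i * (Y.X i * Y.g i))) := by
                rw [mulLift hXe, mulLift heg]
            _ = cq A * Y.e i * Y.X (i + 1) := by
                rw [hrec]; simp only [mul_assoc]
  rw [key, add_sub_cancel_right]

theorem stmt9_aux {A : Type*} [Ring A] [Algebra Rq A] {d n : ℕ} (hd : 0 < d)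
    (Y : YHAff A d n) (i : ℕ) (h1 : 1 ≤ i) (h2 : i ≤ n - 1) (a : ℕ) (ha : 1 ≤ a) :
    Y.g i * Y.X i ^ a = Y.X (i + 1) ^ a * Y.g i -
      cq A * Y.e i * ∑ k ∈ range a, Y.X i ^ k * Y.X (i + 1) ^ (a - k) := by
  have hb := Y.gX_base hd i h1 h2
  have hcX : Y.X i * Y.X (i + 1) = Y.X (i + 1) * Y.X i := Y.X_comm_next i h1 h2
  have hX'e := Y.X_comm_e i (i + 1) h1 h2 (by omega) (by omega)
  induction a, ha using Nat.le_induction with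
  | base =>
    simp only [pow_one, range_one, sum_singleton, pow_zero, one_mul, Nat.sub_zero]
    exact hb
  | succ m hm IH =>
    have hswap : Y.X (i + 1) ^ m * (cq A * Y.e i * Y.X (i + 1))
        = cq A * Y.e i * Y.X (i + 1) ^ (m + 1) := by
      calc Y.X (i + 1) ^ m * (cq A * Y.e i * Y.X (i + 1))
          = Y.X (i + 1) ^ m * cq A * (Y.e i * Y.X (i + 1)) := by
            rw [mul_assoc (Y.X (i+1) ^ m), ← mul_assoc (cq A)]
        _ = cq A * (Y.X (i + 1) ^ m * (Y.e i * Y.X (i + 1))) := by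
            rw [cq_central, mul_assoc]
        _ = cq A * (Y.e i * (Y.X (i + 1) ^ m * Y.X (i + 1))) := by
            rw [mulLift ((show Commute (Y.X (i+1)) (Y.e i) from hX'e).pow_left m).eq]
        _ = cq A * Y.e i * Y.X (i + 1) ^ (m + 1) := by
            rw [← pow_succ, ← mul_assoc]
    have hsum : Y.X (i + 1) ^ (m + 1) +
        (∑ k ∈ range m, Y.X i ^ k * Y.X (i + 1) ^ (m - k)) * Y.X i
        = ∑ k ∈ range (m + 1), Y.X i ^ k * Y.X (i + 1) ^ (m + 1 - k) := by
      rw [Finset.sum_range_succ' (fun k => Y.X i ^ k * Y.X (i + 1) ^ (m + 1 - k)) m]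
      simp only [pow_zero, one_mul, Nat.sub_zero, Nat.succ_sub_succ]
      rw [add_comm, Finset.sum_mul]
      congr 1
      refine Finset.sum_congr rfl fun k hk => ?_
      rw [mul_assoc,
        ((show Commute (Y.X i) (Y.X (i+1)) from hcX).symm.pow_left (m - k)).eq,
        ← mul_assoc, ← pow_succ]
    calc Y.g i * Y.X i ^ (m + 1)
        = Y.g i * Y.X i ^ m * Y.X i := by rw [pow_succ, ← mul_assoc]
      _ = (Y.X (i + 1) ^ m * Y.g i -
          cq A * Y.e i * ∑ k ∈ range m, Y.X i ^ k * Y.X (i + 1) ^ (m - k)) * Y.X i := by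
          rw [IH]
      _ = Y.X (i + 1) ^ m * (Y.g i * Y.X i) -
          cq A * Y.e i * ((∑ k ∈ range m, Y.X i ^ k * Y.X (i + 1) ^ (m - k)) * Y.X i) := by
          rw [sub_mul, mul_assoc, mul_assoc]
      _ = Y.X (i + 1) ^ m * (Y.X (i + 1) * Y.g i) -
          (Y.X (i + 1) ^ m * (cq A * Y.e i * Y.X (i + 1)) +
           cq A * Y.e i * ((∑ k ∈ range m, Y.X i ^ k * Y.X (i + 1) ^ (m - k)) * Y.X i)) := by
          rw [hb, mul_sub, sub_sub]
      _ = Y.X (i + 1) ^ (m + 1) * Y.g i -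
          cq A * Y.e i * (Y.X (i + 1) ^ (m + 1) +
            (∑ k ∈ range m, Y.X i ^ k * Y.X (i + 1) ^ (m - k)) * Y.X i) := by
          rw [hswap, ← mul_add, ← mul_assoc, ← pow_succ]
      _ = _ := by rw [hsum]

/-- In `Y_{d,n}^aff(q)`:
`g_i X_i^a = X_{i+1}^a g_i - (q-q⁻¹) e_i ∑_{k=0}^{a-1} X_i^k X_{i+1}^{a-k}`. -/
theorem stmt9 {A : Type*} [Ring A] [Algebra Rq A] {d n : ℕ} (hd : 0 < d)
    (Y : YHAff A d n) (i : ℕ) (h1 : 1 ≤ i) (h2 : i ≤ n - 1) (a : ℕ) (ha : 1 ≤ a) :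
    Y.g i * Y.X i ^ a = Y.X (i + 1) ^ a * Y.g i -
      cq A * Y.e i * ∑ k ∈ range a, Y.X i ^ k * Y.X (i + 1) ^ (a - k) := stmt9_aux hd Y i h1 h2 a ha
end
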